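/- Let U ⊆ B(H) be a hyperreflexive weak* closed masa-bimodule, and let V ⊆ B(H) be a masa-bimodule for which there exist λ > 0 and a sequence (Φ_n) of Schur idempotents in 𝔉H with sup_n ‖Φ_n‖ < ∞, Φ_{n+1} ≤ Φ_n for all n, V = ⋂_n ran Φ_n, and λ(Φ_n) ≤ λ for all n. Then the intersection W = U ∩ V is hyperreflexive and k(W) ≤ λ + (1 + λ)·k(U). -/

import Mathlib

open scoped InnerProductSpace Pointwise

noncomputable section

namespace SchurHyper

/-- `B H` is the algebra of bounded linear operators on `H`. -/
abbrev B (H : Type*) [NormedAddCommGroup H] [InnerProductSpace ℂ H] : Type _ := H →L[ℂ] H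

variable (H : Type*) [NormedAddCommGroup H] [InnerProductSpace ℂ H]

/-- A linear functional on `B H` is *normal* (weak* continuous) if it arises from
the duality with the trace class, i.e. it is of the form
`T ↦ ∑ₙ ⟪yₙ, T xₙ⟫` for square-summable sequences `(xₙ)`, `(yₙ)`
(recall that the inner product is conjugate-linear in its first slot). -/
def IsNormalFunctional (ω : B H →ₗ[ℂ] ℂ) : Prop :=
  ∃ x y : ℕ → H, Summable (fun n => ‖x n‖ ^ 2) ∧ Summable (fun n => ‖y n‖ ^ 2) ∧
    ∀ T : B H, ω T = ∑' n, ⟪y n, T (x n)⟫_ℂ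

/-- The weak* topology on `B H`: the topology induced by the normal functionals. -/
def weakStarTopology : TopologicalSpace (B H) :=
  TopologicalSpace.induced
    (fun (T : B H) (ω : {ω : B H →ₗ[ℂ] ℂ // IsNormalFunctional H ω}) => ω.1 T)
    inferInstance

/-- A set of operators is weak* closed if it is closed in the weak* topology. -/
def WStarClosed (X : Set (B H)) : Prop := @IsClosed _ (weakStarTopology H) X

/-- The weak* closure of a set of operators. -/
def wStarClosure (X : Set (B H)) : Set (B H) := @closure _ (weakStarTopology H) X

/-- A map on `B H` is weak* continuous if it is continuous with respect to the
weak* topology on both sides. -/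
def WStarContinuous (Φ : B H →L[ℂ] B H) : Prop :=
  @Continuous _ _ (weakStarTopology H) (weakStarTopology H) Φ

variable {H}
variable [CompleteSpace H]

/-- A maximal abelian selfadjoint subalgebra of `B H`: an abelian selfadjoint
subalgebra which contains every operator commuting with it (equivalently, it
coincides with its own commutant). -/
def IsMasa (D : StarSubalgebra ℂ (B H)) : Prop :=
  (∀ A ∈ D, ∀ C ∈ D, A * C = C * A) ∧
  (∀ T : B H, (∀ A ∈ D, T * A = A * T) → T ∈ D)

/-- A Schur multiplier: a weak* continuous `D`-bimodule map on `B H`. -/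
def IsSchurMultiplier (D : StarSubalgebra ℂ (B H)) (Φ : B H →L[ℂ] B H) : Prop :=
  WStarContinuous H Φ ∧ ∀ A ∈ D, ∀ C ∈ D, ∀ T : B H, Φ (A * T * C) = A * Φ T * C

/-- A Schur idempotent: an idempotent Schur multiplier. -/
def IsSchurIdempotent (D : StarSubalgebra ℂ (B H)) (Φ : B H →L[ℂ] B H) : Prop :=
  IsSchurMultiplier D Φ ∧ Φ.comp Φ = Φ

/-- A subspace `X ⊆ B H` is a `D`-bimodule if `D X D ⊆ X`. -/
def IsBimodule (D : StarSubalgebra ℂ (B H)) (X : Submodule ℂ (B H)) : Prop :=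
  ∀ A ∈ D, ∀ C ∈ D, ∀ T ∈ X, A * T * C ∈ X

/-- The Arveson distance `α(T, X)`. -/
def arveson (T : B H) (X : Set (B H)) : ℝ :=
  ⨆ ξ : {ξ : H // ‖ξ‖ = 1}, ⨅ S : X, ‖T ξ.1 - S.1 ξ.1‖

/-- The set of hyperreflexivity constants of `X`. -/
def hyperSet (X : Set (B H)) : Set ℝ :=
  {k | 0 < k ∧ ∀ T : B H, Metric.infDist T X ≤ k * arveson T X}

/-- A subspace is hyperreflexive if `d(T, X) ≤ k ⬝ α(T, X)` for some `k > 0`. -/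
def Hyperreflexive (X : Set (B H)) : Prop := (hyperSet X).Nonempty

/-- The hyperreflexivity constant `k(X)`: the least constant that works. -/
def hyperConst (X : Set (B H)) : ℝ := sInf (hyperSet X)

/-- The set of constants `λ` witnessing that a Schur idempotent lies in `𝔉H`. -/
def lamSet (Φ : B H →L[ℂ] B H) : Set ℝ :=
  {l | 0 < l ∧ ∀ T : B H, ‖T - Φ T‖ ≤ l * arveson T (Set.range Φ)}

/-- The class `𝔉H` of Schur idempotents `Φ` such that
`‖T - Φ T‖ ≤ λ ⬝ α(T, ran Φ)` for some `λ > 0` and all `T`. -/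
def MemFH (D : StarSubalgebra ℂ (B H)) (Φ : B H →L[ℂ] B H) : Prop :=
  IsSchurIdempotent D Φ ∧ (lamSet Φ).Nonempty

/-- The constant `λ(Φ)`: the least constant witnessing membership of `𝔉H`. -/
def lam (Φ : B H →L[ℂ] B H) : ℝ := sInf (lamSet Φ)

/-- A ternary masa-bimodule condition: `S T* R ∈ M` whenever `S, T, R ∈ M`. -/
def IsTernary (M : Submodule ℂ (B H)) : Prop :=
  ∀ S ∈ M, ∀ T ∈ M, ∀ R ∈ M, S * star T * R ∈ M

end SchurHyper

/- ======================= auxiliary development ======================= -/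

namespace SchurHyper

open Filter Topology

section Aux

variable {H : Type*} [NormedAddCommGroup H] [InnerProductSpace ℂ H]

/-! ### basic facts about the Arveson distance -/

lemma arveson_nonneg (T : B H) (X : Set (B H)) : 0 ≤ arveson T X :=
  Real.iSup_nonneg fun _ => Real.iInf_nonneg fun _ => norm_nonneg _

lemma vec_le_norm_op {T : B H} {S : B H} (ξ : {ξ : H // ‖ξ‖ = 1}) :
    ‖T ξ.1 - S ξ.1‖ ≤ ‖T - S‖ := by
  have : ‖(T - S) ξ.1‖ ≤ ‖T - S‖ * ‖ξ.1‖ := (T - S).le_opNorm ξ.1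
  simpa [ξ.2] using this

lemma arveson_le_norm_sub (T : B H) {X : Set (B H)} {S : B H} (hS : S ∈ X) :
    arveson T X ≤ ‖T - S‖ := by
  refine Real.iSup_le (fun ξ => ?_) (norm_nonneg _)
  exact le_trans (ciInf_le ⟨0, by rintro r ⟨s, rfl⟩; exact norm_nonneg _⟩ (⟨S, hS⟩ : X))
    (vec_le_norm_op ξ)

lemma arveson_anti (T : B H) {X Y : Set (B H)} (hXY : X ⊆ Y) (hX : X.Nonempty) :
    arveson T Y ≤ arveson T X := by
  obtain ⟨S0, hS0⟩ := hX
  haveI : Nonempty X := ⟨⟨S0, hS0⟩⟩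
  refine ciSup_mono ?_ (fun ξ => ?_)
  · refine ⟨‖T - S0‖, ?_⟩
    rintro r ⟨ξ, rfl⟩
    exact le_trans (ciInf_le ⟨0, by rintro r ⟨s, rfl⟩; exact norm_nonneg _⟩ (⟨S0, hS0⟩ : X))
      (vec_le_norm_op ξ)
  · refine le_ciInf fun s => ?_
    exact ciInf_le ⟨0, by rintro r ⟨s, rfl⟩; exact norm_nonneg _⟩ (⟨s.1, hXY s.2⟩ : Y)

lemma arveson_eq_zero {T : B H} {M : Submodule ℂ (B H)}
    (h : ∀ ξ : H, T ξ ∈ closure ((fun S : B H => S ξ) '' (M : Set (B H)))) :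
    arveson T (M : Set (B H)) = 0 := by
  refine le_antisymm (Real.iSup_le (fun ξ => ?_) le_rfl) (arveson_nonneg _ _)
  refine le_of_forall_pos_le_add fun ε hε => ?_
  obtain ⟨y, hy, hyd⟩ := Metric.mem_closure_iff.1 (h ξ.1) ε hε
  obtain ⟨S, hS, rfl⟩ := hy
  calc ⨅ S : (M : Set (B H)), ‖T ξ.1 - S.1 ξ.1‖
      ≤ ‖T ξ.1 - S ξ.1‖ :=
        ciInf_le ⟨0, by rintro r ⟨s, rfl⟩; exact norm_nonneg _⟩ (⟨S, hS⟩ : (M : Set (B H)))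
    _ ≤ 0 + ε := by rw [zero_add]; rw [dist_eq_norm] at hyd; exact le_of_lt hyd

end Aux

section Proj

variable {H : Type*} [NormedAddCommGroup H] [InnerProductSpace ℂ H] [CompleteSpace H]

/-- the evaluation-at-ξ linear map `B H →ₗ[ℂ] H`. -/
def evalL (ξ : H) : B H →ₗ[ℂ] H where
  toFun T := T ξ
  map_add' _ _ := rfl
  map_smul' _ _ := rfl

/-- the projection onto a closed subspace, as an element of `B H`. -/
def projOp (K : Submodule ℂ H) [K.HasOrthogonalProjection] : B H :=
  K.subtypeL.comp (Submodule.orthogonalProjectionOnto K)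

lemma projOp_apply_mem (K : Submodule ℂ H) [K.HasOrthogonalProjection] (x : H) :
    projOp K x ∈ K := (Submodule.orthogonalProjectionOnto K x).2

lemma projOp_eq_self (K : Submodule ℂ H) [K.HasOrthogonalProjection] {x : H} (hx : x ∈ K) :
    projOp K x = x := by
  exact (Submodule.starProjection_eq_self_iff (K := K)).2 hx

lemma projOp_comm (K : Submodule ℂ H) [K.HasOrthogonalProjection] {A : B H}
    (hA : ∀ x ∈ K, A x ∈ K) (hA' : ∀ x ∈ K, (ContinuousLinearMap.adjoint A) x ∈ K) :
    projOp K * A = A * projOp K := by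
  ext x
  have hdec : A x = A (projOp K x) + A (x - projOp K x) := by
    rw [← map_add]; congr 1; abel
  have h1 : projOp K (A (projOp K x)) = A (projOp K x) :=
    projOp_eq_self K (hA _ (projOp_apply_mem K x))
  have hperp : x - projOp K x ∈ Kᗮ := by
    exact Submodule.sub_starProjection_mem_orthogonal (K := K) x
  have h2 : A (x - projOp K x) ∈ Kᗮ := by
    intro u hu
    have : ⟪(ContinuousLinearMap.adjoint A) u, x - projOp K x⟫_ℂ = 0 :=
      hperp _ (hA' u hu)
    rwa [ContinuousLinearMap.adjoint_inner_left] at this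
  have h2' : projOp K (A (x - projOp K x)) = 0 := by
    have h0 := Submodule.orthogonalProjectionOnto_apply_of_mem_orthogonal (K := K) h2
    show (K.subtypeL.comp (Submodule.orthogonalProjectionOnto K)) (A (x - projOp K x)) = 0
    rw [ContinuousLinearMap.comp_apply, h0]
    simp
  show projOp K (A x) = A (projOp K x)
  calc projOp K (A x) = projOp K (A (projOp K x) + A (x - projOp K x)) := by rw [← hdec]
    _ = projOp K (A (projOp K x)) + projOp K (A (x - projOp K x)) := map_add _ _ _
    _ = A (projOp K x) + 0 := by rw [h1, h2']
    _ = A (projOp K x) := add_zero _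

variable {D : StarSubalgebra ℂ (B H)}

lemma one_mem_D : (1 : B H) ∈ D := D.one_mem'

/-- The projection onto the closure of a `D`-invariant subspace belongs to the masa. -/
lemma projOp_mem_masa (hD : IsMasa D) (W : Submodule ℂ H)
    (hW : ∀ A ∈ D, ∀ x ∈ W, A x ∈ W) :
    projOp W.topologicalClosure ∈ D ∧
      (∀ A ∈ D, ∀ x ∈ W.topologicalClosure, A x ∈ W.topologicalClosure) := by
  set K := W.topologicalClosure with hK
  haveI : K.HasOrthogonalProjection := by
    haveI : CompleteSpace K := (W.isClosed_topologicalClosure).completeSpace_coe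
    infer_instance
  have hinv : ∀ A ∈ D, ∀ x ∈ K, A x ∈ K := by
    intro A hA x hx
    have hmaps : Set.MapsTo A (W : Set H) (K : Set H) := fun w hw =>
      W.le_topologicalClosure (hW A hA w hw)
    have : Set.MapsTo A (closure (W : Set H)) (closure (K : Set H)) :=
      hmaps.closure A.continuous
    have hx' : x ∈ closure (W : Set H) := by
      rwa [← Submodule.topologicalClosure_coe]
    exact (W.isClosed_topologicalClosure.closure_eq ▸ this hx' : A x ∈ (K : Set H))
  refine ⟨hD.2 _ fun A hA => ?_, hinv⟩
  have hstar : (ContinuousLinearMap.adjoint A) = star A := (ContinuousLinearMap.star_eq_adjoint A).symm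
  exact projOp_comm K (hinv A hA) (by
    rw [hstar]
    exact hinv (star A) (D.star_mem' hA))

/-- KEY LEMMA: a `D`-bimodule map sends an element of a `D`-bimodule `M` into the
pointwise closure of `M`, for every vector `ξ`. -/
lemma bimodule_map_pointwise (hD : IsMasa D) (Φ : B H →L[ℂ] B H)
    (hΦ : ∀ A ∈ D, ∀ C ∈ D, ∀ T : B H, Φ (A * T * C) = A * Φ T * C)
    (M : Submodule ℂ (B H)) (hM : IsBimodule D M) {A : B H} (hA : A ∈ M) (ξ : H) :
    Φ A ξ ∈ closure ((fun S : B H => S ξ) '' (M : Set (B H))) := by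
  classical
  set W : Submodule ℂ H := M.map (evalL ξ) with hWdef
  set K := W.topologicalClosure with hKdef
  haveI : K.HasOrthogonalProjection := by
    haveI : CompleteSpace K := (W.isClosed_topologicalClosure).completeSpace_coe
    infer_instance
  have hWinv : ∀ A' ∈ D, ∀ x ∈ W, A' x ∈ W := by
    rintro A' hA' x hx
    obtain ⟨S, hS, rfl⟩ := hx
    refine ⟨A' * S, ?_, rfl⟩
    have := hM A' hA' 1 one_mem_D S hS
    simpa using this
  obtain ⟨hPmem, _⟩ := projOp_mem_masa hD W hWinv
  set P := projOp K with hPdef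
  set W2 : Submodule ℂ H := (Subalgebra.toSubmodule D.toSubalgebra).map (evalL ξ) with hW2def
  set K2 := W2.topologicalClosure with hK2def
  haveI : K2.HasOrthogonalProjection := by
    haveI : CompleteSpace K2 := (W2.isClosed_topologicalClosure).completeSpace_coe
    infer_instance
  have hW2inv : ∀ A' ∈ D, ∀ x ∈ W2, A' x ∈ W2 := by
    rintro A' hA' x hx
    obtain ⟨C, hC, rfl⟩ := hx
    exact ⟨A' * C, (Subalgebra.mem_toSubmodule _).2 (mul_mem hA' hC), rfl⟩
  obtain ⟨hQmem, _⟩ := projOp_mem_masa hD W2 hW2inv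
  set Q := projOp K2 with hQdef
  have hξ : Q ξ = ξ := by
    refine projOp_eq_self _ (W2.le_topologicalClosure ?_)
    exact Submodule.mem_map.2 ⟨1, (Subalgebra.mem_toSubmodule _).2 (one_mem _), by simp [evalL]⟩
  have h1P : (1 : B H) - P ∈ D := sub_mem one_mem_D hPmem
  set S' : B H := ((1 : B H) - P) * A with hS'def
  have hS'Q : S' * Q = 0 := by
    ext x
    have hQx : Q x ∈ K2 := projOp_apply_mem _ x
    have hker : (K2 : Set H) ⊆ (LinearMap.ker (S' : H →ₗ[ℂ] H) : Set H) := by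
      have : W2 ≤ LinearMap.ker (S' : H →ₗ[ℂ] H) := by
        rintro y ⟨C, hC, rfl⟩
        have hACξ : (A * C) ξ ∈ K := by
          refine W.le_topologicalClosure ?_
          refine ⟨A * C, ?_, rfl⟩
          have := hM 1 one_mem_D C hC A hA
          simpa using this
        have : P ((A * C) ξ) = (A * C) ξ := projOp_eq_self _ hACξ
        simp only [LinearMap.mem_ker]
        show S' (C ξ) = 0
        have : S' (C ξ) = (A * C) ξ - P ((A * C) ξ) := by
          simp [hS'def, ContinuousLinearMap.sub_apply, ContinuousLinearMap.mul_apply]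
        rw [this, projOp_eq_self _ hACξ, sub_self]
      intro z hz
      exact Submodule.topologicalClosure_minimal W2 this (ContinuousLinearMap.isClosed_ker S') hz
    have : S' (Q x) = 0 := hker hQx
    simpa [ContinuousLinearMap.mul_apply] using this
  have hΦS' : Φ S' = ((1 : B H) - P) * Φ A := by
    have := hΦ ((1 : B H) - P) h1P 1 one_mem_D A
    simpa [hS'def] using this
  have hΦS'Q : Φ S' * Q = 0 := by
    have h := hΦ 1 one_mem_D Q hQmem S'
    have h' : Φ (S' * Q) = Φ S' * Q := by simpa using h
    rw [hS'Q] at h'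
    simpa using h'.symm
  have hkey : ((1 : B H) - P) (Φ A ξ) = 0 := by
    have : (Φ S' * Q) ξ = 0 := by rw [hΦS'Q]; rfl
    rw [ContinuousLinearMap.mul_apply, hξ, hΦS'] at this
    simpa [ContinuousLinearMap.mul_apply] using this
  have hmem : Φ A ξ ∈ K := by
    have : Φ A ξ = P (Φ A ξ) := by
      have h0 : Φ A ξ - P (Φ A ξ) = 0 := by
        simpa [ContinuousLinearMap.sub_apply] using hkey
      exact sub_eq_zero.mp h0
    rw [this]
    exact projOp_apply_mem _ _
  have hKset : (K : Set H) = closure ((fun S : B H => S ξ) '' (M : Set (B H))) := by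
    rw [hKdef, Submodule.topologicalClosure_coe, hWdef, Submodule.map_coe]
    rfl
  rw [← hKset]
  exact hmem

end Proj

section WStar

variable {H : Type*} [NormedAddCommGroup H] [InnerProductSpace ℂ H]

lemma summable_xy {x y : ℕ → H} (hx : Summable (fun n => ‖x n‖ ^ 2))
    (hy : Summable (fun n => ‖y n‖ ^ 2)) : Summable (fun n => ‖y n‖ * ‖x n‖) := by
  refine Summable.of_nonneg_of_le (fun n => by positivity)
    (fun n => ?_) (((hx.add hy).div_const 2))
  have h := two_mul_le_add_sq ‖y n‖ ‖x n‖
  nlinarith [h]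

lemma normal_bound {ω : B H →ₗ[ℂ] ℂ} (hω : IsNormalFunctional H ω) :
    ∃ c : ℝ, 0 ≤ c ∧ ∀ T : B H, ‖ω T‖ ≤ c * ‖T‖ := by
  obtain ⟨x, y, hx, hy, hrep⟩ := hω
  refine ⟨∑' n, ‖y n‖ * ‖x n‖, tsum_nonneg fun n => by positivity, fun T => ?_⟩
  rw [hrep]
  have hsummand : ∀ n, ‖⟪y n, T (x n)⟫_ℂ‖ ≤ (‖y n‖ * ‖x n‖) * ‖T‖ := by
    intro n
    calc ‖⟪y n, T (x n)⟫_ℂ‖ ≤ ‖y n‖ * ‖T (x n)‖ := norm_inner_le_norm _ _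
      _ ≤ ‖y n‖ * (‖T‖ * ‖x n‖) := by
          exact mul_le_mul_of_nonneg_left (T.le_opNorm _) (norm_nonneg _)
      _ = (‖y n‖ * ‖x n‖) * ‖T‖ := by ring
  have hsum : Summable (fun n => (‖y n‖ * ‖x n‖) * ‖T‖) := (summable_xy hx hy).mul_right _
  calc ‖∑' n, ⟪y n, T (x n)⟫_ℂ‖ ≤ ∑' n, ‖⟪y n, T (x n)⟫_ℂ‖ := by
        refine norm_tsum_le_tsum_norm ?_
        exact Summable.of_nonneg_of_le (fun n => norm_nonneg _) hsummand hsum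
    _ ≤ ∑' n, (‖y n‖ * ‖x n‖) * ‖T‖ := by
        refine Summable.tsum_le_tsum hsummand ?_ hsum
        exact Summable.of_nonneg_of_le (fun n => norm_nonneg _) hsummand hsum
    _ = (∑' n, ‖y n‖ * ‖x n‖) * ‖T‖ := tsum_mul_right

lemma continuous_id_norm_to_wstar :
    @Continuous (B H) (B H) _ (weakStarTopology H) id := by
  refine continuous_induced_rng.2 ?_
  refine continuous_pi fun ω => ?_
  obtain ⟨c, hc, hbound⟩ := normal_bound ω.2
  exact (LinearMap.mkContinuous ω.1 c (fun T => hbound T)).continuous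

lemma normClosed_of_wstarClosed {X : Set (B H)}
    (h : @IsClosed _ (weakStarTopology H) X) : IsClosed X := by
  have := @IsClosed.preimage (B H) (B H) _ (weakStarTopology H) id
    (continuous_id_norm_to_wstar) X h
  simpa using this

/-- rank-one functionals -/
def rankOneF (ξ η : H) : B H →ₗ[ℂ] ℂ where
  toFun T := ⟪η, T ξ⟫_ℂ
  map_add' T S := by simp [inner_add_right]
  map_smul' c T := by simp [inner_smul_right]

lemma rankOneF_normal (ξ η : H) : IsNormalFunctional H (rankOneF ξ η) := by
  classical
  refine ⟨fun n => if n = 0 then ξ else 0, fun n => if n = 0 then η else 0, ?_, ?_, ?_⟩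
  · apply summable_of_ne_finset_zero (s := ({0} : Finset ℕ))
    intro n hn
    have hne : n ≠ 0 := by simpa using hn
    simp [hne]
  · apply summable_of_ne_finset_zero (s := ({0} : Finset ℕ))
    intro n hn
    have hne : n ≠ 0 := by simpa using hn
    simp [hne]
  · intro T
    have : ∀ n, n ≠ 0 →
        ⟪(if n = 0 then η else 0 : H), T (if n = 0 then ξ else 0)⟫_ℂ = 0 := by
      intro n hn; simp [hn]
    rw [tsum_eq_single 0 this]
    simp [rankOneF]

lemma wstar_tendsto_iff {ι : Type*} {F : Filter ι} {g : ι → B H} {x : B H} :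
    Filter.Tendsto g F (@nhds _ (weakStarTopology H) x) ↔
      ∀ ω : {ω : B H →ₗ[ℂ] ℂ // IsNormalFunctional H ω},
        Filter.Tendsto (fun n => ω.1 (g n)) F (𝓝 (ω.1 x)) := by
  rw [weakStarTopology, nhds_induced, Filter.tendsto_comap_iff]
  constructor
  · intro h ω
    have := Filter.Tendsto.comp ((continuous_apply ω).tendsto
      (fun ω' : {ω : B H →ₗ[ℂ] ℂ // IsNormalFunctional H ω} => ω'.1 x)) h
    exact this
  · intro h
    rw [show (fun T : B H => fun (ω : {ω : B H →ₗ[ℂ] ℂ // IsNormalFunctional H ω}) => ω.1 T) ∘ g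
        = fun n => fun ω : {ω : B H →ₗ[ℂ] ℂ // IsNormalFunctional H ω} => ω.1 (g n) from rfl]
    exact tendsto_pi_nhds.2 h

end WStar

section Limit

variable {H : Type*} [NormedAddCommGroup H] [InnerProductSpace ℂ H] [CompleteSpace H]

/-- ultrafilter limit of a bounded sequence of operators, in the pointwise-weak sense. -/
lemma exists_ultrafilter_limit_op (𝒰 : Ultrafilter ℕ) (Bs : ℕ → B H) {M : ℝ}
    (hM : ∀ n, ‖Bs n‖ ≤ M) :
    ∃ Bop : B H, ‖Bop‖ ≤ M ∧
      ∀ ξ η : H, Filter.Tendsto (fun n => ⟪Bs n ξ, η⟫_ℂ) (𝒰 : Filter ℕ) (𝓝 ⟪Bop ξ, η⟫_ℂ) := by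
  classical
  have hM0 : 0 ≤ M := le_trans (norm_nonneg _) (hM 0)
  have hex : ∀ ξ η : H, ∃ z : ℂ,
      Filter.Tendsto (fun n => ⟪Bs n ξ, η⟫_ℂ) (𝒰 : Filter ℕ) (𝓝 z) := by
    intro ξ η
    have hball : ∀ n, ⟪Bs n ξ, η⟫_ℂ ∈ Metric.closedBall (0 : ℂ) (M * ‖ξ‖ * ‖η‖) := by
      intro n
      rw [Metric.mem_closedBall, dist_zero_right]
      calc ‖⟪Bs n ξ, η⟫_ℂ‖ ≤ ‖Bs n ξ‖ * ‖η‖ := norm_inner_le_norm _ _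
        _ ≤ (M * ‖ξ‖) * ‖η‖ := by
            have := (Bs n).le_opNorm ξ
            have h2 : ‖Bs n ξ‖ ≤ M * ‖ξ‖ :=
              le_trans this (mul_le_mul_of_nonneg_right (hM n) (norm_nonneg _))
            exact mul_le_mul_of_nonneg_right h2 (norm_nonneg _)
        _ = M * ‖ξ‖ * ‖η‖ := by ring
    obtain ⟨z, _, hz⟩ := (isCompact_closedBall (0 : ℂ) (M * ‖ξ‖ * ‖η‖)).ultrafilter_le_nhds
      (𝒰.map fun n => ⟪Bs n ξ, η⟫_ℂ)
      (by rw [Ultrafilter.coe_map, Filter.le_principal_iff]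
          exact Filter.mem_map.2 (Filter.univ_mem' hball))
    exact ⟨z, by rwa [Ultrafilter.coe_map] at hz⟩
  set glim : H → H → ℂ := fun ξ η => (hex ξ η).choose with hglimdef
  have hglim : ∀ ξ η, Filter.Tendsto (fun n => ⟪Bs n ξ, η⟫_ℂ) (𝒰 : Filter ℕ) (𝓝 (glim ξ η)) :=
    fun ξ η => (hex ξ η).choose_spec
  have huniq : ∀ {ξ η} {z : ℂ},
      Filter.Tendsto (fun n => ⟪Bs n ξ, η⟫_ℂ) (𝒰 : Filter ℕ) (𝓝 z) → glim ξ η = z :=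
    fun h => tendsto_nhds_unique (hglim _ _) h
  have hbound : ∀ ξ η, ‖glim ξ η‖ ≤ M * ‖ξ‖ * ‖η‖ := by
    intro ξ η
    refine le_of_tendsto' (hglim ξ η).norm fun n => ?_
    calc ‖⟪Bs n ξ, η⟫_ℂ‖ ≤ ‖Bs n ξ‖ * ‖η‖ := norm_inner_le_norm _ _
      _ ≤ (M * ‖ξ‖) * ‖η‖ := mul_le_mul_of_nonneg_right
          (le_trans ((Bs n).le_opNorm ξ) (mul_le_mul_of_nonneg_right (hM n) (norm_nonneg _)))
          (norm_nonneg _)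
      _ = M * ‖ξ‖ * ‖η‖ := by ring
  have φdef : ∀ ξ : H, ∃ φ : StrongDual ℂ H, (∀ η, φ η = glim ξ η) ∧ ‖φ‖ ≤ M * ‖ξ‖ := by
    intro ξ
    have hadd : ∀ η η', glim ξ (η + η') = glim ξ η + glim ξ η' := by
      intro η η'
      refine huniq ?_
      have := (hglim ξ η).add (hglim ξ η')
      simpa [inner_add_right] using this
    have hsmul : ∀ (c : ℂ) η, glim ξ (c • η) = c * glim ξ η := by
      intro c η
      refine huniq ?_
      have := (hglim ξ η).const_mul c
      simpa [inner_smul_right] using this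
    refine ⟨LinearMap.mkContinuous
      { toFun := fun η => glim ξ η
        map_add' := hadd
        map_smul' := hsmul } (M * ‖ξ‖) (fun η => hbound ξ η), fun η => rfl, ?_⟩
    exact LinearMap.mkContinuous_norm_le _ (by positivity) _
  set φ : H → StrongDual ℂ H := fun ξ => (φdef ξ).choose with hφdef
  have hφ : ∀ ξ η, φ ξ η = glim ξ η := fun ξ => (φdef ξ).choose_spec.1
  have hφn : ∀ ξ, ‖φ ξ‖ ≤ M * ‖ξ‖ := fun ξ => (φdef ξ).choose_spec.2
  set Bv : H → H := fun ξ => (InnerProductSpace.toDual ℂ H).symm (φ ξ) with hBvdef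
  have hBv : ∀ ξ η, ⟪Bv ξ, η⟫_ℂ = glim ξ η := by
    intro ξ η
    rw [hBvdef]
    rw [InnerProductSpace.toDual_symm_apply]
    exact hφ ξ η
  have hBvadd : ∀ ξ ξ', Bv (ξ + ξ') = Bv ξ + Bv ξ' := by
    intro ξ ξ'
    refine ext_inner_right ℂ fun η => ?_
    rw [hBv, inner_add_left, hBv, hBv]
    refine huniq ?_
    have := (hglim ξ η).add (hglim ξ' η)
    simpa [inner_add_left] using this
  have hBvsmul : ∀ (c : ℂ) ξ, Bv (c • ξ) = c • Bv ξ := by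
    intro c ξ
    refine ext_inner_right ℂ fun η => ?_
    rw [hBv, inner_smul_left, hBv]
    refine huniq ?_
    have := (hglim ξ η).const_mul (starRingEnd ℂ c)
    simpa [inner_smul_left, mul_comm] using this
  have hBvnorm : ∀ ξ, ‖Bv ξ‖ ≤ M * ‖ξ‖ := by
    intro ξ
    rw [hBvdef]
    calc ‖(InnerProductSpace.toDual ℂ H).symm (φ ξ)‖ = ‖φ ξ‖ :=
          LinearIsometryEquiv.norm_map _ _
      _ ≤ M * ‖ξ‖ := hφn ξ
  set BvL : H →ₗ[ℂ] H :=
    { toFun := Bv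
      map_add' := hBvadd
      map_smul' := fun c ξ => hBvsmul c ξ } with hBvL
  refine ⟨LinearMap.mkContinuous BvL M hBvnorm,
    LinearMap.mkContinuous_norm_le _ hM0 _, fun ξ η => ?_⟩
  have h0 : ⟪(LinearMap.mkContinuous BvL M hBvnorm) ξ, η⟫_ℂ = glim ξ η := hBv ξ η
  rw [h0]
  exact hglim ξ η

/-- dominated convergence for `tsum` along a filter. -/
lemma tendsto_tsum_of_dominated {ι : Type*} {F : Filter ι} [F.NeBot]
    {g : ι → ℕ → ℂ} {L : ℕ → ℂ} {c : ℕ → ℝ} (hc : Summable c)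
    (hg : ∀ i j, ‖g i j‖ ≤ c j)
    (hL : ∀ j, Filter.Tendsto (fun i => g i j) F (𝓝 (L j))) :
    Filter.Tendsto (fun i => ∑' j, g i j) F (𝓝 (∑' j, L j)) := by
  have hLb : ∀ j, ‖L j‖ ≤ c j := fun j => le_of_tendsto' (hL j).norm fun i => hg i j
  have hgs : ∀ i, Summable (g i) := fun i =>
    Summable.of_norm_bounded hc (hg i)
  have hLs : Summable L := Summable.of_norm_bounded hc hLb
  rw [Metric.tendsto_nhds]
  intro ε hε
  have htail : Filter.Tendsto (fun N => ∑' j, c (j + N)) atTop (𝓝 0) := by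
    simpa using tendsto_sum_nat_add c
  obtain ⟨N, hN⟩ : ∃ N, ∑' j, c (j + N) < ε / 3 :=
    (htail.eventually (eventually_lt_nhds (show (0:ℝ) < ε / 3 by linarith))).exists
  have htailg : ∀ i, ‖∑' j, g i (j + N)‖ ≤ ∑' j, c (j + N) := by
    intro i
    refine norm_tsum_le_tsum_norm ?_ |>.trans (Summable.tsum_le_tsum (fun j => hg i (j + N)) ?_ ?_)
    · exact (Summable.of_norm_bounded ((summable_nat_add_iff N).2 hc)
        (fun j => hg i (j + N))).norm
    · exact ((Summable.of_norm_bounded ((summable_nat_add_iff N).2 hc)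
        (fun j => hg i (j + N))).norm)
    · exact (summable_nat_add_iff N).2 hc
  have htailL : ‖∑' j, L (j + N)‖ ≤ ∑' j, c (j + N) := by
    refine norm_tsum_le_tsum_norm ?_ |>.trans (Summable.tsum_le_tsum (fun j => hLb (j + N)) ?_ ?_)
    · exact (Summable.of_norm_bounded ((summable_nat_add_iff N).2 hc)
        (fun j => hLb (j + N))).norm
    · exact (Summable.of_norm_bounded ((summable_nat_add_iff N).2 hc)
        (fun j => hLb (j + N))).norm
    · exact (summable_nat_add_iff N).2 hc
  have hfin : Filter.Tendsto (fun i => ∑ j ∈ Finset.range N, g i j) F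
      (𝓝 (∑ j ∈ Finset.range N, L j)) :=
    tendsto_finset_sum _ fun j _ => hL j
  have hfin' : ∀ᶠ i in F, dist (∑ j ∈ Finset.range N, g i j) (∑ j ∈ Finset.range N, L j)
      < ε / 3 := Metric.tendsto_nhds.1 hfin (ε / 3) (by linarith)
  refine hfin'.mono fun i hi => ?_
  have hsplitg : ∑' j, g i j = ∑ j ∈ Finset.range N, g i j + ∑' j, g i (j + N) :=
    (Summable.sum_add_tsum_nat_add N (hgs i)).symm
  have hsplitL : ∑' j, L j = ∑ j ∈ Finset.range N, L j + ∑' j, L (j + N) :=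
    (Summable.sum_add_tsum_nat_add N hLs).symm
  rw [hsplitg, hsplitL, dist_eq_norm]
  calc ‖(∑ j ∈ Finset.range N, g i j + ∑' j, g i (j + N)) -
        (∑ j ∈ Finset.range N, L j + ∑' j, L (j + N))‖
      = ‖(∑ j ∈ Finset.range N, g i j - ∑ j ∈ Finset.range N, L j) +
          (∑' j, g i (j + N) - ∑' j, L (j + N))‖ := by
            congr 1
            abel
    _ ≤ ‖∑ j ∈ Finset.range N, g i j - ∑ j ∈ Finset.range N, L j‖ +
        ‖∑' j, g i (j + N) - ∑' j, L (j + N)‖ := norm_add_le _ _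
    _ ≤ ‖∑ j ∈ Finset.range N, g i j - ∑ j ∈ Finset.range N, L j‖ +
        (‖∑' j, g i (j + N)‖ + ‖∑' j, L (j + N)‖) := by
          have := norm_sub_le (∑' j, g i (j + N)) (∑' j, L (j + N))
          linarith
    _ < ε / 3 + (ε / 3 + ε / 3) := by
        rw [dist_eq_norm] at hi
        have h1 := htailg i
        have h2 := htailL
        apply add_lt_add_of_lt_of_le hi
        linarith
    _ = ε := by ring

end Limit

end SchurHyper

open SchurHyper
open Filter Topology

/-- if `U` is a hyperreflexive weak* closed masa-bimodule and `V`
is an approximately H-injective masa-bimodule (witnessed by a uniformly bounded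
decreasing sequence `(Φₙ)` in `𝔉H` with `λ(Φₙ) ≤ λ` and `V = ⋂ₙ ran Φₙ`), then
`W = U ∩ V` is hyperreflexive and `k(W) ≤ λ + (1 + λ)·k(U)`. -/
theorem stmt15 {H : Type*} [NormedAddCommGroup H] [InnerProductSpace ℂ H] [CompleteSpace H]
    [TopologicalSpace.SeparableSpace H]
    (D : StarSubalgebra ℂ (B H)) (hD : IsMasa D)
    (U : Submodule ℂ (B H)) (hUbim : IsBimodule D U)
    (hUcl : WStarClosed H (U : Set (B H))) (hUhr : Hyperreflexive (U : Set (B H)))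
    (V : Submodule ℂ (B H)) (hVbim : IsBimodule D V)
    (l : ℝ) (hl : 0 < l) (Φ : ℕ → (B H →L[ℂ] B H))
    (hΦ : ∀ n, MemFH D (Φ n))
    (hΦbdd : BddAbove (Set.range fun n => ‖Φ n‖))
    (hΦdec : ∀ n, (Φ (n + 1)).comp (Φ n) = Φ (n + 1))
    (hV : (V : Set (B H)) = ⋂ n, Set.range ⇑(Φ n))
    (hΦl : ∀ n, lam (Φ n) ≤ l) :
    Hyperreflexive ((U : Set (B H)) ∩ (V : Set (B H))) ∧
    hyperConst ((U : Set (B H)) ∩ (V : Set (B H))) ≤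
      l + (1 + l) * hyperConst (U : Set (B H)) := by
    classical
  obtain ⟨M0, hM0mem⟩ := hΦbdd
  have hM0 : ∀ n, ‖Φ n‖ ≤ M0 := fun n => hM0mem ⟨n, rfl⟩
  have h1l : (0:ℝ) < 1 + l := by linarith
  have hbim : ∀ n, ∀ A ∈ D, ∀ C ∈ D, ∀ T : B H, Φ n (A * T * C) = A * Φ n T * C :=
    fun n => (hΦ n).1.1.2
  have hwcont : ∀ n, WStarContinuous H (Φ n) := fun n => (hΦ n).1.1.1
  have hidem : ∀ n (T : B H), Φ n (Φ n T) = Φ n T := by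
    intro n T
    have h := (hΦ n).1.2
    calc Φ n (Φ n T) = ((Φ n).comp (Φ n)) T := rfl
      _ = Φ n T := by rw [h]
  -- the λ-inequality holds with the uniform constant l
  have hlam : ∀ n (T : B H), ‖T - Φ n T‖ ≤ l * arveson T (Set.range ⇑(Φ n)) := by
    intro n T
    have hne := (hΦ n).2
    have hbdd : BddBelow (lamSet (Φ n)) := ⟨0, fun x hx => hx.1.le⟩
    have hα : 0 ≤ arveson T (Set.range ⇑(Φ n)) := arveson_nonneg _ _
    refine le_of_forall_pos_le_add fun ε hε => ?_
    set α := arveson T (Set.range ⇑(Φ n)) with hαdef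
    set δ := ε / (α + 1) with hδ
    have hδpos : 0 < δ := div_pos hε (by linarith)
    have hlt : lam (Φ n) < l + δ := lt_of_le_of_lt (hΦl n) (by linarith)
    obtain ⟨l', hl'mem, hl'lt⟩ := (csInf_lt_iff hbdd hne).1 hlt
    calc ‖T - Φ n T‖ ≤ l' * α := hl'mem.2 T
      _ ≤ (l + δ) * α := mul_le_mul_of_nonneg_right hl'lt.le hα
      _ = l * α + δ * α := by ring
      _ ≤ l * α + ε := by
          have h1 : δ * α ≤ δ * (α + 1) := mul_le_mul_of_nonneg_left (by linarith) hδpos.le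
          have h2 : δ * (α + 1) = ε := by
            rw [hδ]; field_simp
          linarith
  -- range submodules
  set R : ℕ → Submodule ℂ (B H) := fun n => LinearMap.range (Φ n : B H →ₗ[ℂ] B H) with hR
  have hRset : ∀ n, ((R n : Submodule ℂ (B H)) : Set (B H)) = Set.range ⇑(Φ n) := fun n =>
    LinearMap.coe_range _
  have hRbim : ∀ n, IsBimodule D (R n) := by
    intro n A hA C hC T hT
    obtain ⟨S, rfl⟩ := LinearMap.mem_range.1 hT
    exact LinearMap.mem_range.2 ⟨A * S * C, hbim n A hA C hC S⟩
  have hRmem : ∀ n (X : B H), arveson X (Set.range ⇑(Φ n)) = 0 → X ∈ Set.range ⇑(Φ n) := by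
    intro n X h0
    have h1 := hlam n X
    rw [h0, mul_zero] at h1
    have h2 : X - Φ n X = 0 := norm_eq_zero.mp (le_antisymm h1 (norm_nonneg _))
    exact ⟨X, (sub_eq_zero.mp h2).symm⟩
  -- the key invariance property
  have hinv : ∀ n (M : Submodule ℂ (B H)), IsBimodule D M → ∀ A ∈ M,
      arveson (Φ n A) (M : Set (B H)) = 0 := fun n M hM A hA =>
    arveson_eq_zero (fun ξ => bimodule_map_pointwise hD (Φ n) (hbim n) M hM hA ξ)
  -- facts about U
  have hUnorm : IsClosed (U : Set (B H)) := normClosed_of_wstarClosed hUcl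
  have hUne : (U : Set (B H)).Nonempty := ⟨0, U.zero_mem⟩
  have hUmem0 : ∀ X : B H, arveson X (U : Set (B H)) = 0 → X ∈ U := by
    intro X h0
    obtain ⟨κ0, hκ0⟩ := hUhr
    have h1 : Metric.infDist X (U : Set (B H)) ≤ κ0 * arveson X (U : Set (B H)) := hκ0.2 X
    rw [h0, mul_zero] at h1
    have h2 : Metric.infDist X (U : Set (B H)) = 0 := le_antisymm h1 Metric.infDist_nonneg
    have h3 : X ∈ closure (U : Set (B H)) := (Metric.mem_closure_iff_infDist_zero hUne).2 h2
    rwa [hUnorm.closure_eq] at h3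
  have hΦU : ∀ n, ∀ A ∈ U, Φ n A ∈ U := fun n A hA => hUmem0 _ (hinv n U hUbim A hA)
  -- the decreasing chain
  have hfix : ∀ k (X : B H), Φ k (Φ (k+1) X) = Φ (k+1) X := by
    intro k X
    set Y := Φ (k+1) X with hY
    have hYmem : Y ∈ R (k+1) := LinearMap.mem_range.2 ⟨X, rfl⟩
    have h0 : arveson (Φ k Y) ((R (k+1) : Submodule ℂ (B H)) : Set (B H)) = 0 :=
      hinv k (R (k+1)) (hRbim (k+1)) Y hYmem
    rw [hRset] at h0
    obtain ⟨Z, hZ⟩ := hRmem (k+1) _ h0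
    have h1 : Φ (k+1) (Φ k Y) = Φ k Y := by rw [← hZ, hidem]
    have h2 : Φ (k+1) (Φ k Y) = Φ (k+1) Y := by
      have h := hΦdec k
      calc Φ (k+1) (Φ k Y) = ((Φ (k+1)).comp (Φ k)) Y := rfl
        _ = Φ (k+1) Y := by rw [h]
    have h3 : Φ (k+1) Y = Y := by rw [hY]; exact hidem (k+1) X
    calc Φ k Y = Φ (k+1) (Φ k Y) := h1.symm
      _ = Φ (k+1) Y := h2
      _ = Y := h3
  have hchain : ∀ m n, m ≤ n → ∀ X : B H, Φ m (Φ n X) = Φ n X := by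
    intro m n hmn
    induction n, hmn using Nat.le_induction with
    | base => exact fun X => hidem m X
    | succ n hmn ih =>
      intro X
      have h1 : Φ n (Φ (n+1) X) = Φ (n+1) X := hfix n X
      calc Φ m (Φ (n+1) X) = Φ m (Φ n (Φ (n+1) X)) := by rw [h1]
        _ = Φ n (Φ (n+1) X) := ih _
        _ = Φ (n+1) X := h1
  -- facts about W = U ∩ V
  set Wset : Set (B H) := (U : Set (B H)) ∩ (V : Set (B H)) with hWsetdef
  have hWne : Wset.Nonempty := ⟨0, U.zero_mem, V.zero_mem⟩
  have hWsubU : Wset ⊆ (U : Set (B H)) := Set.inter_subset_left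
  have hWsubR : ∀ n, Wset ⊆ Set.range ⇑(Φ n) := by
    intro n x hx
    have h := hx.2
    rw [hV] at h
    exact Set.mem_iInter.1 h n
  -- main estimate: for every κ ∈ hyperSet U, l + (1+l)κ ∈ hyperSet W
  have hkey : ∀ κ ∈ hyperSet (U : Set (B H)), (l + (1 + l) * κ) ∈ hyperSet Wset := by
    rintro κ ⟨hκpos, hκ⟩
    refine ⟨by nlinarith, fun T => ?_⟩
    set a := arveson T Wset with ha
    have hanneg : 0 ≤ a := arveson_nonneg _ _
    refine le_of_forall_pos_le_add fun ε' hε' => ?_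
    set ε := ε' / (1 + l) with hε
    have hεpos : 0 < ε := div_pos hε' h1l
    have hαU : arveson T (U : Set (B H)) ≤ a := arveson_anti T hWsubU hWne
    have hlt : Metric.infDist T (U : Set (B H)) < κ * a + ε := by
      have h1 : Metric.infDist T (U : Set (B H)) ≤ κ * a :=
        le_trans (hκ T) (mul_le_mul_of_nonneg_left hαU hκpos.le)
      linarith
    obtain ⟨A, hAU, hTA⟩ := (Metric.infDist_lt_iff hUne).1 hlt
    rw [dist_eq_norm] at hTA
    set c := l * a + (1 + l) * (κ * a + ε) with hc
    have hcnn : 0 ≤ c := by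
      have e1 : 0 ≤ l * a := mul_nonneg hl.le hanneg
      have e2 : 0 ≤ κ * a + ε := by nlinarith [mul_nonneg hκpos.le hanneg]
      have e3 : 0 ≤ (1 + l) * (κ * a + ε) := mul_nonneg h1l.le e2
      linarith [hc]
    have hest : ∀ n, ‖T - Φ n A‖ ≤ c := by
      intro n
      have hzero_mem : (0 : B H) ∈ Set.range ⇑(Φ n) := ⟨0, map_zero _⟩
      have hαR : arveson T (Set.range ⇑(Φ n)) ≤ a := arveson_anti T (hWsubR n) hWne
      have h1 : ‖T - Φ n T‖ ≤ l * a :=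
        le_trans (hlam n T) (mul_le_mul_of_nonneg_left hαR hl.le)
      have h2 : ‖Φ n (T - A)‖ ≤ (1 + l) * ‖T - A‖ := by
        have h3 : arveson (T - A) (Set.range ⇑(Φ n)) ≤ ‖T - A‖ := by
          have := arveson_le_norm_sub (T - A) hzero_mem
          simpa using this
        have h4 : ‖(T - A) - Φ n (T - A)‖ ≤ l * ‖T - A‖ :=
          le_trans (hlam n (T - A)) (mul_le_mul_of_nonneg_left h3 hl.le)
        calc ‖Φ n (T - A)‖ = ‖(T - A) - ((T - A) - Φ n (T - A))‖ := by
              congr 1; abel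
          _ ≤ ‖T - A‖ + ‖(T - A) - Φ n (T - A)‖ := norm_sub_le _ _
          _ ≤ ‖T - A‖ + l * ‖T - A‖ := by linarith
          _ = (1 + l) * ‖T - A‖ := by ring
      calc ‖T - Φ n A‖ = ‖(T - Φ n T) + Φ n (T - A)‖ := by
            congr 1
            rw [map_sub]
            abel
        _ ≤ ‖T - Φ n T‖ + ‖Φ n (T - A)‖ := norm_add_le _ _
        _ ≤ l * a + (1 + l) * ‖T - A‖ := by linarith
        _ ≤ c := by rw [hc]; nlinarith [hTA]
    -- ultrafilter limit of the Φ n A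
    set 𝒰 : Ultrafilter ℕ := Ultrafilter.of Filter.atTop with h𝒰def
    have h𝒰le : (𝒰 : Filter ℕ) ≤ Filter.atTop := Ultrafilter.of_le _
    have hBnorm : ∀ n, ‖Φ n A‖ ≤ M0 * ‖A‖ := fun n =>
      le_trans ((Φ n).le_opNorm A) (mul_le_mul_of_nonneg_right (hM0 n) (norm_nonneg _))
    obtain ⟨Bop, hBopn, hB⟩ := exists_ultrafilter_limit_op 𝒰 (fun n => Φ n A) hBnorm
    have hall : ∀ ω : {ω : B H →ₗ[ℂ] ℂ // IsNormalFunctional H ω},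
        Filter.Tendsto (fun n => ω.1 (Φ n A)) (𝒰 : Filter ℕ) (𝓝 (ω.1 Bop)) := by
      intro ω
      obtain ⟨x, y, hx, hy, hrep⟩ := ω.2
      have hconv : Filter.Tendsto (fun n => ∑' j, ⟪y j, (Φ n A) (x j)⟫_ℂ) (𝒰 : Filter ℕ)
          (𝓝 (∑' j, ⟪y j, Bop (x j)⟫_ℂ)) := by
        refine tendsto_tsum_of_dominated ((summable_xy hx hy).mul_left (M0 * ‖A‖)) ?_ ?_
        · intro n j
          calc ‖⟪y j, (Φ n A) (x j)⟫_ℂ‖ ≤ ‖y j‖ * ‖(Φ n A) (x j)‖ := norm_inner_le_norm _ _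
            _ ≤ ‖y j‖ * ((M0 * ‖A‖) * ‖x j‖) := by
                refine mul_le_mul_of_nonneg_left ?_ (norm_nonneg _)
                exact le_trans ((Φ n A).le_opNorm _)
                  (mul_le_mul_of_nonneg_right (hBnorm n) (norm_nonneg _))
            _ = (M0 * ‖A‖) * (‖y j‖ * ‖x j‖) := by ring
        · intro j
          have := (hB (x j) (y j)).star
          simpa [inner_conj_symm] using this
      have e1 : (fun n => ω.1 (Φ n A)) = fun n => ∑' j, ⟪y j, (Φ n A) (x j)⟫_ℂ := by
        funext n; exact hrep _
      rw [e1, hrep Bop]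
      exact hconv
    have hwt : Filter.Tendsto (fun n => Φ n A) (𝒰 : Filter ℕ)
        (@nhds _ (weakStarTopology H) Bop) := wstar_tendsto_iff.2 hall
    -- Bop lies in U
    have hBU : Bop ∈ (U : Set (B H)) := by
      have hev : ∀ᶠ n in (𝒰 : Filter ℕ), Φ n A ∈ (U : Set (B H)) :=
        Filter.Eventually.of_forall fun n => hΦU n A hAU
      letI : TopologicalSpace (B H) := weakStarTopology H
      have hUcl' : IsClosed (U : Set (B H)) := hUcl
      have hcl : Bop ∈ closure (U : Set (B H)) := mem_closure_of_tendsto hwt hev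
      rwa [hUcl'.closure_eq] at hcl
    -- Bop lies in V
    have hBV : Bop ∈ (V : Set (B H)) := by
      rw [hV]
      refine Set.mem_iInter.2 fun m => ?_
      have hcont : @Continuous _ _ (weakStarTopology H) (weakStarTopology H) (Φ m) := hwcont m
      have h2 : Filter.Tendsto (fun n => Φ m (Φ n A)) (𝒰 : Filter ℕ)
          (@nhds _ (weakStarTopology H) (Φ m Bop)) := by
        have h := @Continuous.tendsto _ _ (weakStarTopology H) (weakStarTopology H) _ hcont Bop
        exact h.comp hwt
      have h3 : ∀ᶠ n in (𝒰 : Filter ℕ), Φ m (Φ n A) = Φ n A := by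
        have h4 : ∀ᶠ n in (𝒰 : Filter ℕ), m ≤ n :=
          (Filter.eventually_ge_atTop m).filter_mono h𝒰le
        exact h4.mono fun n hn => hchain m n hn A
      have h4 : Filter.Tendsto (fun n => Φ n A) (𝒰 : Filter ℕ)
          (@nhds _ (weakStarTopology H) (Φ m Bop)) := Filter.Tendsto.congr' h3 h2
      have h5 : ∀ ξ η : H, ⟪η, (Φ m Bop) ξ⟫_ℂ = ⟪η, Bop ξ⟫_ℂ := by
        intro ξ η
        have t1 := wstar_tendsto_iff.1 h4 ⟨rankOneF ξ η, rankOneF_normal ξ η⟩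
        have t2 := wstar_tendsto_iff.1 hwt ⟨rankOneF ξ η, rankOneF_normal ξ η⟩
        exact tendsto_nhds_unique t1 t2
      have h6 : Φ m Bop = Bop := by
        ext ξ
        exact ext_inner_left ℂ fun η => h5 ξ η
      exact ⟨Bop, h6⟩
    -- the norm estimate ‖T - Bop‖ ≤ c
    have hTB : ‖T - Bop‖ ≤ c := by
      refine ContinuousLinearMap.opNorm_le_bound _ hcnn fun ξ => ?_
      set v := (T - Bop) ξ with hv
      have hconv : Filter.Tendsto (fun n => ⟪(T - Φ n A) ξ, v⟫_ℂ) (𝒰 : Filter ℕ)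
          (𝓝 ⟪(T - Bop) ξ, v⟫_ℂ) := by
        have h1 : Filter.Tendsto (fun n => ⟪(Φ n A) ξ, v⟫_ℂ) (𝒰 : Filter ℕ)
            (𝓝 ⟪Bop ξ, v⟫_ℂ) := hB ξ v
        have h2 := h1.const_sub (⟪T ξ, v⟫_ℂ)
        have e : ∀ n, ⟪T ξ, v⟫_ℂ - ⟪(Φ n A) ξ, v⟫_ℂ = ⟪(T - Φ n A) ξ, v⟫_ℂ := by
          intro n
          rw [ContinuousLinearMap.sub_apply, inner_sub_left]
        have e2 : ⟪T ξ, v⟫_ℂ - ⟪Bop ξ, v⟫_ℂ = ⟪(T - Bop) ξ, v⟫_ℂ := by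
          rw [ContinuousLinearMap.sub_apply, inner_sub_left]
        rw [← e2]
        exact h2.congr e
      have hbnd : ‖⟪(T - Bop) ξ, v⟫_ℂ‖ ≤ c * ‖ξ‖ * ‖v‖ := by
        refine le_of_tendsto' hconv.norm fun n => ?_
        calc ‖⟪(T - Φ n A) ξ, v⟫_ℂ‖ ≤ ‖(T - Φ n A) ξ‖ * ‖v‖ := norm_inner_le_norm _ _
          _ ≤ (c * ‖ξ‖) * ‖v‖ := by
              refine mul_le_mul_of_nonneg_right ?_ (norm_nonneg _)
              exact le_trans ((T - Φ n A).le_opNorm ξ)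
                (mul_le_mul_of_nonneg_right (hest n) (norm_nonneg _))
          _ = c * ‖ξ‖ * ‖v‖ := by ring
      have h7 : ‖⟪v, v⟫_ℂ‖ = ‖v‖ ^ 2 := by
        rw [inner_self_eq_norm_sq_to_K, norm_pow]
        simp
      have hvv : ‖v‖ ^ 2 ≤ c * ‖ξ‖ * ‖v‖ := by
        rw [← h7]
        exact hbnd
      show ‖v‖ ≤ c * ‖ξ‖
      rcases eq_or_lt_of_le (norm_nonneg v) with h0 | h0
      · rw [← h0]; positivity
      · refine le_of_mul_le_mul_right ?_ h0
        calc ‖v‖ * ‖v‖ = ‖v‖ ^ 2 := by ring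
          _ ≤ c * ‖ξ‖ * ‖v‖ := hvv
          _ = (c * ‖ξ‖) * ‖v‖ := by ring
    -- conclude
    have hmemW : Bop ∈ Wset := ⟨hBU, hBV⟩
    calc Metric.infDist T Wset ≤ dist T Bop := Metric.infDist_le_dist_of_mem hmemW
      _ = ‖T - Bop‖ := dist_eq_norm _ _
      _ ≤ c := hTB
      _ = (l + (1 + l) * κ) * a + (1 + l) * ε := by rw [hc]; ring
      _ = (l + (1 + l) * κ) * a + ε' := by
          rw [hε]
          field_simp
  obtain ⟨κ0, hκ0⟩ := hUhr
  have hhrW : Hyperreflexive Wset := ⟨_, hkey κ0 hκ0⟩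
  refine ⟨hhrW, ?_⟩
  have hbddW : BddBelow (hyperSet Wset) := ⟨0, fun x hx => hx.1.le⟩
  have hbddU : BddBelow (hyperSet (U : Set (B H))) := ⟨0, fun x hx => hx.1.le⟩
  refine le_of_forall_pos_le_add fun ε hε => ?_
  have hεl : 0 < ε / (1 + l) := div_pos hε h1l
  have hlt : hyperConst (U : Set (B H)) < hyperConst (U : Set (B H)) + ε / (1 + l) := by
    linarith
  obtain ⟨κ, hκmem, hκlt⟩ := (csInf_lt_iff hbddU ⟨κ0, hκ0⟩).1 hlt
  have h1 : hyperConst Wset ≤ l + (1 + l) * κ := csInf_le hbddW (hkey κ hκmem)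
  have h2 : (1 + l) * κ ≤ (1 + l) * hyperConst (U : Set (B H)) + ε := by
    have h3 := mul_le_mul_of_nonneg_left hκlt.le h1l.le
    calc (1 + l) * κ ≤ (1 + l) * (hyperConst (U : Set (B H)) + ε / (1 + l)) := h3
      _ = (1 + l) * hyperConst (U : Set (B H)) + ε := by
          field_simp
  linarith
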